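/- Let n ≥ 3 be odd and N = n+1 (so N is even). The number of facets of P_N is exactly 2·binom(N−1, N/2 − 1), i.e., 2·binom(n, (n−1)/2). -/

import Mathlib

/-- The polytope `P_N = conv{±e_1, …, ±e_n, ±(e_1 + ⋯ + e_n)} ⊂ ℝ^n` (with `N = n+1`). -/
noncomputable def PN (n : ℕ) : Set (Fin n → ℝ) :=
  convexHull ℝ
    ({v | ∃ i : Fin n, v = Pi.single i 1 ∨ v = -Pi.single i 1} ∪
      {(fun _ => 1 : Fin n → ℝ), (fun _ => -1 : Fin n → ℝ)})

/-- `F` is a facet of the `n`-dimensional polytope `P ⊆ ℝ^n`: an exposed face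
`F = {x ∈ P : ℓ(x) = max_{y ∈ P} ℓ(y)}` for some nonzero linear functional `ℓ`,
whose affine span has dimension `n - 1`. -/
def IsFacet (n : ℕ) (P F : Set (Fin n → ℝ)) : Prop :=
  ∃ ℓ : (Fin n → ℝ) →ₗ[ℝ] ℝ, ℓ ≠ 0 ∧
    F = {x | x ∈ P ∧ ∀ y ∈ P, ℓ y ≤ ℓ x} ∧
    Module.finrank ℝ (affineSpan ℝ F).direction = n - 1

open Finset
noncomputable section
namespace CFPN
variable {n : ℕ}

def lf (ε : Fin n → ℝ) : (Fin n → ℝ) →ₗ[ℝ] ℝ := ∑ i, ε i • LinearMap.proj i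

lemma lf_apply (ε x : Fin n → ℝ) : lf ε x = ∑ i, ε i * x i := by
  simp [lf, LinearMap.proj_apply]

lemma lf_single (ε : Fin n → ℝ) (j : Fin n) : lf ε (Pi.single j 1) = ε j := by
  rw [lf_apply]
  rw [Finset.sum_eq_single j]
  · simp
  · intro b _ hb; simp [Pi.single_apply, hb]
  · simp

lemma lf_ones (ε : Fin n → ℝ) : lf ε (fun _ => (1:ℝ)) = ∑ i, ε i := by
  simp [lf_apply]

/-- The vertex set. -/
def Vtx (n : ℕ) : Set (Fin n → ℝ) :=
  {v | ∃ i : Fin n, v = Pi.single i 1 ∨ v = -Pi.single i 1} ∪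
    {(fun _ => 1 : Fin n → ℝ), (fun _ => -1 : Fin n → ℝ)}

lemma PN_eq (n : ℕ) : PN n = convexHull ℝ (Vtx n) := rfl

lemma single_mem_PN (i : Fin n) : Pi.single i 1 ∈ PN n :=
  subset_convexHull ℝ _ (Or.inl ⟨i, Or.inl rfl⟩)

lemma neg_single_mem_PN (i : Fin n) : -Pi.single i 1 ∈ PN n :=
  subset_convexHull ℝ _ (Or.inl ⟨i, Or.inr rfl⟩)

lemma ones_mem_PN : (fun _ => (1:ℝ) : Fin n → ℝ) ∈ PN n :=
  subset_convexHull ℝ _ (Or.inr (Or.inl rfl))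

lemma neg_ones_mem_PN : (fun _ => (-1:ℝ) : Fin n → ℝ) ∈ PN n :=
  subset_convexHull ℝ _ (Or.inr (Or.inr rfl))

/-- Admissible sign vectors. -/
def A (n : ℕ) : Set (Fin n → ℝ) :=
  {ε | (∀ i, ε i = 1 ∨ ε i = -1) ∧ ((∑ i, ε i) = 1 ∨ (∑ i, ε i) = -1)}

lemma lf_le_one {ε : Fin n → ℝ} (hε : ε ∈ A n) : ∀ y ∈ PN n, lf ε y ≤ 1 := by
  intro y hy
  have hconv : Convex ℝ {y : Fin n → ℝ | lf ε y ≤ 1} :=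
    convex_halfSpace_le (lf ε).isLinear 1
  refine convexHull_min ?_ hconv hy
  rintro v (⟨i, rfl | rfl⟩ | rfl | rfl)
  · simp only [Set.mem_setOf_eq, lf_single]
    rcases hε.1 i with h | h <;> rw [h] <;> norm_num
  · simp only [Set.mem_setOf_eq, map_neg, lf_single]
    rcases hε.1 i with h | h <;> rw [h] <;> norm_num
  · simp only [Set.mem_setOf_eq, lf_ones]
    rcases hε.2 with h | h <;> rw [h] <;> norm_num
  · have : (fun _ => (-1:ℝ) : Fin n → ℝ) = -(fun _ => (1:ℝ)) := by funext j; simp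
    simp only [Set.mem_setOf_eq, this, map_neg, lf_ones]
    rcases hε.2 with h | h <;> rw [h] <;> norm_num

/-- The candidate facet set for a sign vector. -/
def Fface (ε : Fin n → ℝ) : Set (Fin n → ℝ) :=
  {x | x ∈ PN n ∧ ∀ y ∈ PN n, lf ε y ≤ lf ε x}

/-- vertex points of a facet -/
lemma pt_mem_PN {ε : Fin n → ℝ} (hε : ε ∈ A n) (i : Fin n) :
    ε i • (Pi.single i 1 : Fin n → ℝ) ∈ PN n := by
  rcases hε.1 i with h | h <;> rw [h]
  · rw [one_smul]; exact single_mem_PN i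
  · rw [neg_smul, one_smul]; exact neg_single_mem_PN i

lemma lf_pt {ε : Fin n → ℝ} (hε : ε ∈ A n) (i : Fin n) :
    lf ε (ε i • (Pi.single i 1 : Fin n → ℝ)) = 1 := by
  rw [map_smul, lf_single, smul_eq_mul]
  rcases hε.1 i with h | h <;> rw [h] <;> norm_num

lemma pt_mem_Fface {ε : Fin n → ℝ} (hε : ε ∈ A n) (i : Fin n) :
    ε i • (Pi.single i 1 : Fin n → ℝ) ∈ Fface ε := by
  refine ⟨pt_mem_PN hε i, fun y hy => ?_⟩
  rw [lf_pt hε i]; exact lf_le_one hε y hy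

lemma mem_Fface_lf_eq_one (hn : 0 < n) {ε : Fin n → ℝ} (hε : ε ∈ A n) {x : Fin n → ℝ}
    (hx : x ∈ Fface ε) : lf ε x = 1 := by
  refine le_antisymm (lf_le_one hε x hx.1) ?_
  have := hx.2 _ (pt_mem_PN hε ⟨0, hn⟩)
  rwa [lf_pt hε] at this


lemma single_eq_ite (i : Fin n) :
    (Pi.single i 1 : Fin n → ℝ) = fun j => if i = j then (1:ℝ) else 0 := by
  funext j; simp [Pi.single_apply, eq_comm]

lemma vectorSpan_Fface (hn : 0 < n) {ε : Fin n → ℝ} (hε : ε ∈ A n) :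
    vectorSpan ℝ (Fface ε) = LinearMap.ker (lf ε) := by
  apply le_antisymm
  · rw [vectorSpan_def]
    rw [Submodule.span_le]
    rintro v hv
    rw [Set.mem_vsub] at hv
    obtain ⟨x, hx, y, hy, rfl⟩ := hv
    rw [SetLike.mem_coe, LinearMap.mem_ker, vsub_eq_sub, map_sub,
      mem_Fface_lf_eq_one hn hε hx, mem_Fface_lf_eq_one hn hε hy, sub_self]
  · intro x hx
    rw [LinearMap.mem_ker, lf_apply] at hx
    set i0 : Fin n := ⟨0, hn⟩
    have hsq : ∀ i, ε i * ε i = 1 := by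
      intro i; rcases hε.1 i with h | h <;> rw [h] <;> norm_num
    have hx' : x = ∑ i, (ε i * x i) •
        (ε i • (Pi.single i 1 : Fin n → ℝ) - ε i0 • (Pi.single i0 1 : Fin n → ℝ)) := by
      have h1 : ∑ i, (ε i * x i) • (ε i • (Pi.single i 1 : Fin n → ℝ)
          - ε i0 • (Pi.single i0 1 : Fin n → ℝ))
          = (∑ i, (ε i * x i) • ε i • (Pi.single i 1 : Fin n → ℝ))
            - (∑ i, ε i * x i) • ε i0 • (Pi.single i0 1 : Fin n → ℝ) := by
        simp_rw [smul_sub]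
        rw [Finset.sum_sub_distrib, Finset.sum_smul]
      rw [h1]
      have h2 : ∀ i : Fin n, (ε i * x i) • ε i • (Pi.single i 1 : Fin n → ℝ)
          = x i • (Pi.single i 1 : Fin n → ℝ) := by
        intro i
        rw [smul_smul]
        congr 1
        rw [mul_comm (ε i) (x i), mul_assoc, hsq, mul_one]
      have h3 : (∑ i, ε i * x i) = 0 := hx
      rw [h3, zero_smul, sub_zero]
      simp_rw [h2]
      conv_lhs => rw [pi_eq_sum_univ x]
      refine Finset.sum_congr rfl fun i _ => ?_
      rw [single_eq_ite]
    rw [hx']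
    apply Submodule.sum_mem
    intro i _
    apply Submodule.smul_mem
    have := vsub_mem_vectorSpan ℝ (pt_mem_Fface hε i) (pt_mem_Fface hε i0)
    rwa [vsub_eq_sub] at this

lemma lf_ne_zero (hn : 0 < n) {ε : Fin n → ℝ} (hε : ∀ i, ε i = 1 ∨ ε i = -1) : lf ε ≠ 0 := by
  intro h
  have := congrArg (fun f : (Fin n → ℝ) →ₗ[ℝ] ℝ => f (Pi.single ⟨0, hn⟩ 1)) h
  simp only [lf_single, LinearMap.zero_apply] at this
  rcases hε ⟨0, hn⟩ with h' | h' <;> rw [h'] at this <;> norm_num at this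

lemma finrank_ker_lf (hn : 0 < n) {ε : Fin n → ℝ} (hε : ∀ i, ε i = 1 ∨ ε i = -1) :
    Module.finrank ℝ (LinearMap.ker (lf ε)) = n - 1 := by
  have hsurj : Function.Surjective (lf ε) := by
    intro r
    refine ⟨(r * ε ⟨0, hn⟩) • (Pi.single ⟨0, hn⟩ 1 : Fin n → ℝ), ?_⟩
    rw [map_smul, lf_single, smul_eq_mul]
    rcases hε ⟨0, hn⟩ with h | h <;> rw [h] <;> ring
  have h1 := LinearMap.finrank_range_add_finrank_ker (lf ε)
  rw [LinearMap.range_eq_top.mpr hsurj, finrank_top] at h1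
  have h2 : Module.finrank ℝ (Fin n → ℝ) = n := by
    simp [Module.finrank_pi]
  have h3 : Module.finrank ℝ ℝ = 1 := Module.finrank_self ℝ
  omega

lemma isFacet_Fface (hn : 0 < n) {ε : Fin n → ℝ} (hε : ε ∈ A n) :
    IsFacet n (PN n) (Fface ε) := by
  refine ⟨lf ε, lf_ne_zero hn hε.1, rfl, ?_⟩
  rw [direction_affineSpan, vectorSpan_Fface hn hε, finrank_ker_lf hn hε.1]

lemma Vtx_finite (n : ℕ) : (Vtx n).Finite := by
  have : Vtx n ⊆ (Set.range fun i : Fin n => (Pi.single i 1 : Fin n → ℝ)) ∪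
      (Set.range fun i : Fin n => -(Pi.single i 1 : Fin n → ℝ)) ∪
      {(fun _ => 1 : Fin n → ℝ), (fun _ => -1 : Fin n → ℝ)} := by
    rintro v (⟨i, rfl | rfl⟩ | hv)
    · exact Or.inl (Or.inl ⟨i, rfl⟩)
    · exact Or.inl (Or.inr ⟨i, rfl⟩)
    · exact Or.inr hv
  exact Set.Finite.subset (((Set.finite_range _).union (Set.finite_range _)).union
    ((Set.finite_singleton _).insert _)) this

/-- Points of a hull where a linear functional attains its max lie in the hull of
the vertices attaining the max. -/
lemma mem_convexHull_exposed {E : Type*} [AddCommGroup E] [Module ℝ E]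
    {V : Set E} (hV : V.Finite) (ℓ : E →ₗ[ℝ] ℝ) {m : ℝ}
    (hb : ∀ v ∈ V, ℓ v ≤ m) {x : E} (hx : x ∈ convexHull ℝ V) (hm : ℓ x = m) :
    x ∈ convexHull ℝ {v | v ∈ V ∧ ℓ v = m} := by
  classical
  set t := hV.toFinset with ht
  have hVt : V = ↑t := by simp [ht]
  rw [hVt, Finset.convexHull_eq] at hx
  obtain ⟨w, hw₀, hw₁, hcm⟩ := hx
  rw [Finset.centerMass_eq_of_sum_1 _ _ hw₁] at hcm
  have hlx : ∑ y ∈ t, w y * ℓ y = m := by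
    rw [← hm, ← hcm, map_sum]
    refine Finset.sum_congr rfl fun y _ => ?_
    rw [id_eq, map_smul, smul_eq_mul]
  have hsum0 : ∑ y ∈ t, w y * (m - ℓ y) = 0 := by
    simp_rw [mul_sub]
    rw [Finset.sum_sub_distrib, ← Finset.sum_mul, hw₁, one_mul, hlx, sub_self]
  have key : ∀ y ∈ t, w y * (m - ℓ y) = 0 := by
    refine (Finset.sum_eq_zero_iff_of_nonneg fun y hy => ?_).mp hsum0
    exact mul_nonneg (hw₀ y hy) (sub_nonneg.2 (hb y (by rw [hVt]; exact_mod_cast hy)))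
  have dec : DecidablePred (fun v => ℓ v = m) := Classical.decPred _
  set t' := t.filter (fun v => ℓ v = m) with ht'
  have hzero : ∀ y ∈ t, y ∉ t' → w y = 0 := by
    intro y hy hyn
    rcases mul_eq_zero.mp (key y hy) with h | h
    · exact h
    · exfalso; exact hyn (Finset.mem_filter.mpr ⟨hy, by linarith [sub_eq_zero.mp h]⟩)
  simp only [id_eq] at hcm
  have hx' : ∑ y ∈ t', w y • y = x := by
    rw [← hcm]
    exact Finset.sum_subset (Finset.filter_subset _ _) fun y hy hyn => by
      rw [hzero y hy hyn, zero_smul]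
  have hw₁' : ∑ y ∈ t', w y = 1 := by
    rw [← hw₁]
    exact Finset.sum_subset (Finset.filter_subset _ _) fun y hy hyn => hzero y hy hyn
  have := Finset.centerMass_mem_convexHull (t := t') (w := w) (z := id)
    (s := {v | v ∈ V ∧ ℓ v = m})
    (fun y hy => hw₀ y (Finset.mem_filter.mp hy).1) (by rw [hw₁']; norm_num)
    (fun y hy => ?_)
  · rw [Finset.centerMass_eq_of_sum_1 _ _ hw₁'] at this
    simp only [id_eq] at this
    rwa [hx'] at this
  · obtain ⟨hyt, hym⟩ := Finset.mem_filter.mp hy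
    exact ⟨by rw [hVt]; exact_mod_cast hyt, hym⟩

lemma finrank_vs_le {k : ℕ} {s : Set (Fin n → ℝ)} {W : Finset (Fin n → ℝ)}
    (hsW : s ⊆ ↑W) (hW : W.card ≤ k + 1) :
    Module.finrank ℝ (vectorSpan ℝ s) ≤ k := by
  classical
  have hmono : vectorSpan ℝ s ≤ vectorSpan ℝ (↑W : Set (Fin n → ℝ)) := vectorSpan_mono ℝ hsW
  have hle := Submodule.finrank_mono hmono
  refine le_trans hle ?_
  rcases W.eq_empty_or_nonempty with rfl | ⟨p, hp⟩
  · rw [Finset.coe_empty, vectorSpan_empty]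
    simp
  · have hc : W.card = (W.card - 1) + 1 := by
      have : 1 ≤ W.card := Finset.card_pos.mpr ⟨p, hp⟩
      omega
    have := finrank_vectorSpan_image_finset_le (k := ℝ) id W hc
    rw [Finset.image_id] at this
    exact le_trans this (by omega)

lemma sum_pm (t : Finset (Fin n)) (ε : Fin n → ℝ) (h : ∀ i ∈ t, ε i = 1 ∨ ε i = -1) :
    ∃ c : ℕ, c ≤ t.card ∧ ∑ i ∈ t, ε i = 2 * (c : ℝ) - (t.card : ℝ) := by
  classical
  refine ⟨(t.filter (fun i => ε i = 1)).card, Finset.card_filter_le _ _, ?_⟩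
  rw [← Finset.sum_filter_add_sum_filter_not t (fun i => ε i = 1)]
  have h1 : ∑ i ∈ t.filter (fun i => ε i = 1), ε i
      = ((t.filter (fun i => ε i = 1)).card : ℝ) := by
    rw [Finset.sum_congr rfl (fun i hi => (Finset.mem_filter.mp hi).2), Finset.sum_const]
    simp
  have h2 : ∑ i ∈ t.filter (fun i => ¬ ε i = 1), ε i
      = -((t.filter (fun i => ¬ ε i = 1)).card : ℝ) := by
    have hall : ∀ i ∈ t.filter (fun i => ¬ ε i = 1), ε i = -1 := by
      intro i hi
      obtain ⟨hit, hne⟩ := Finset.mem_filter.mp hi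
      rcases h i hit with h1 | h1
      · exact absurd h1 hne
      · exact h1
    rw [Finset.sum_congr rfl hall, Finset.sum_const]
    simp
  rw [h1, h2]
  have h3 := Finset.card_filter_add_card_filter_not (s := t) (p := fun i => ε i = 1)
  have h4 : ((t.filter (fun i => ε i = 1)).card : ℝ)
      + ((t.filter (fun i => ¬ ε i = 1)).card : ℝ) = (t.card : ℝ) := by
    exact_mod_cast congrArg (Nat.cast : ℕ → ℝ) h3
  linarith

/-- Contradiction in the degenerate case where `∑ b = σ·m` but some coordinate has `|b i| < m`. -/
lemma branch_contra (hn : 3 ≤ n) (hodd : Odd n) {ℓ : (Fin n → ℝ) →ₗ[ℝ] ℝ} {m : ℝ}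
    (hm0 : 0 < m) {b : Fin n → ℝ} (hbdef : ∀ i, b i = ℓ (Pi.single i 1))
    (hℓx : ∀ x, ℓ x = ∑ i, x i * b i)
    {VF : Set (Fin n → ℝ)} (hVFdef : VF = {v | v ∈ Vtx n ∧ ℓ v = m})
    (hdim : Module.finrank ℝ (vectorSpan ℝ VF) = n - 1)
    {i0 : Fin n} (hi0l : -m < b i0) (hi0r : b i0 < m)
    (σ : ℝ) (hσ : σ = 1 ∨ σ = -1) (hS : ∑ i, b i = σ * m) : False := by
  classical
  set T : Finset (Fin n) := Finset.univ.filter (fun i => b i = m ∨ b i = -m) with hTdef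
  set f : Fin n → (Fin n → ℝ) :=
    fun i => if b i = m then (Pi.single i 1 : Fin n → ℝ) else -Pi.single i 1 with hf
  have hi0T : i0 ∉ T := by
    simp only [hTdef, Finset.mem_filter, Finset.mem_univ, true_and]
    rintro (h | h)
    · exact absurd h (ne_of_lt hi0r)
    · exact absurd h (ne_of_gt hi0l)
  have hVsub : VF ⊆ ↑(T.image f) ∪ {(fun _ => σ : Fin n → ℝ)} := by
    rw [hVFdef]
    rintro v ⟨hv, hvm⟩
    rcases hv with ⟨i, rfl | rfl⟩ | rfl | rfl
    · left
      have hbi : b i = m := by rw [hbdef]; exact hvm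
      refine Finset.mem_coe.mpr (Finset.mem_image.mpr ⟨i, ?_, ?_⟩)
      · simp [hTdef, hbi]
      · simp [hf, hbi]
    · left
      have hbi : b i = -m := by
        have h2 : ℓ (-Pi.single i 1) = m := hvm
        rw [map_neg, ← hbdef] at h2
        linarith
      refine Finset.mem_coe.mpr (Finset.mem_image.mpr ⟨i, ?_, ?_⟩)
      · simp [hTdef, hbi]
      · rw [hf]
        simp only
        rw [if_neg (by rw [hbi]; intro h; linarith)]
    · have h1 : ℓ (fun _ => (1:ℝ)) = ∑ i, b i := by rw [hℓx]; simp
      have h2 : σ * m = m := by rw [← hS, ← h1]; exact hvm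
      have hσ1 : σ = 1 := by
        rcases hσ with h | h
        · exact h
        · exfalso; rw [h] at h2; linarith
      right
      simp [hσ1]
    · have h1 : ℓ (fun _ => (-1:ℝ)) = -∑ i, b i := by
        rw [hℓx, ← Finset.sum_neg_distrib]
        exact Finset.sum_congr rfl fun i _ => by ring
      have h2 : -(σ * m) = m := by rw [← hS, ← h1]; exact hvm
      have hσ1 : σ = -1 := by
        rcases hσ with h | h
        · exfalso; rw [h] at h2; linarith
        · exact h
      right
      simp [hσ1]
  by_cases hT1 : ∀ i, i ≠ i0 → i ∈ T
  · -- parity contradiction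
    set ε : Fin n → ℝ := fun i => b i / m with hε
    have hεpm : ∀ i ∈ Finset.univ.erase i0, ε i = 1 ∨ ε i = -1 := by
      intro i hi
      have hiT : i ∈ T := hT1 i (Finset.mem_erase.mp hi).1
      rw [hTdef, Finset.mem_filter] at hiT
      rcases hiT.2 with h | h
      · left; rw [hε]; simp only; rw [h]; field_simp
      · right; rw [hε]; simp only; rw [h]; field_simp
    obtain ⟨c, hcle, hc⟩ := sum_pm (Finset.univ.erase i0) ε hεpm
    rw [Finset.card_erase_of_mem (Finset.mem_univ i0), Finset.card_univ, Fintype.card_fin] at hc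
    have hsum_erase : ∑ i ∈ Finset.univ.erase i0, b i
        = m * ∑ i ∈ Finset.univ.erase i0, ε i := by
      rw [Finset.mul_sum]
      refine Finset.sum_congr rfl fun i hi => ?_
      rw [hε]; field_simp
    have hcast : ((n - 1 : ℕ) : ℝ) = (n : ℝ) - 1 := by
      have h1 : 1 ≤ n := by omega
      push_cast [h1]
      ring
    have hbi0 : b i0 = m * (σ - (2 * (c:ℝ) - ((n:ℝ) - 1))) := by
      have h6 := Finset.add_sum_erase Finset.univ b (Finset.mem_univ i0)
      rw [hsum_erase, hc, hcast] at h6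
      have h7 : b i0 = σ * m - m * (2*(c:ℝ) - ((n:ℝ)-1)) := by
        rw [← hS, ← h6]; ring
      rw [h7]; ring
    obtain ⟨r, hr⟩ := hodd
    obtain ⟨σz, hσz, hσzpm⟩ : ∃ σz : ℤ, σ = (σz:ℝ) ∧ (σz = 1 ∨ σz = -1) := by
      rcases hσ with h | h
      · exact ⟨1, by simp [h], Or.inl rfl⟩
      · exact ⟨-1, by simp [h], Or.inr rfl⟩
    set z : ℤ := σz - (2*(c:ℤ) - ((n:ℤ) - 1)) with hz
    have hD : σ - (2*(c:ℝ) - ((n:ℝ)-1)) = (z:ℝ) := by rw [hσz, hz]; push_cast; ring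
    have hbi0' : b i0 = m * (z:ℝ) := by rw [← hD, hbi0]
    have h1 : (z:ℝ) < 1 := by
      have h2 : m * (z:ℝ) < m * 1 := by rw [mul_one, ← hbi0']; exact hi0r
      exact (mul_lt_mul_iff_right₀ hm0).mp h2
    have h2 : (-1:ℝ) < (z:ℝ) := by
      have h3 : m * (-1:ℝ) < m * (z:ℝ) := by rw [← hbi0']; linarith
      exact (mul_lt_mul_iff_right₀ hm0).mp h3
    have hz1 : z < 1 := by exact_mod_cast h1
    have hz2 : -1 < z := by exact_mod_cast h2
    have hzn : (n:ℤ) = 2*(r:ℤ)+1 := by exact_mod_cast hr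
    rcases hσzpm with h | h <;> omega
  · -- dimension contradiction
    push_neg at hT1
    obtain ⟨i1, hi1ne, hi1T⟩ := hT1
    have hTsub : T ⊆ (Finset.univ.erase i0).erase i1 := by
      intro i hi
      refine Finset.mem_erase.mpr ⟨?_, Finset.mem_erase.mpr ⟨?_, Finset.mem_univ i⟩⟩
      · rintro rfl; exact hi1T hi
      · rintro rfl; exact hi0T hi
    have hcardT : T.card ≤ n - 2 := by
      have h4 := Finset.card_le_card hTsub
      rw [Finset.card_erase_of_mem (Finset.mem_erase.mpr ⟨hi1ne, Finset.mem_univ i1⟩),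
        Finset.card_erase_of_mem (Finset.mem_univ i0), Finset.card_univ, Fintype.card_fin] at h4
      omega
    set W : Finset (Fin n → ℝ) := T.image f ∪ {(fun _ => σ : Fin n → ℝ)} with hW
    have hVW : VF ⊆ ↑W := by
      intro v hv
      have h5 := hVsub hv
      rw [hW, Finset.coe_union, Finset.coe_singleton]
      exact h5
    have hcardW : W.card ≤ (n-2) + 1 := by
      have h6 : W.card ≤ (T.image f).card + 1 := by
        rw [hW]
        exact le_trans (Finset.card_union_le _ _) (by simp)
      have h7 := Finset.card_image_le (s := T) (f := f)
      omega
    have h8 := finrank_vs_le hVW hcardW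
    omega

lemma facet_classify (hn : 3 ≤ n) (hodd : Odd n) {F : Set (Fin n → ℝ)}
    (hF : IsFacet n (PN n) F) : ∃ ε ∈ A n, F = Fface ε := by
  classical
  obtain ⟨ℓ, hℓ0, hFeq, hdim⟩ := hF
  rw [direction_affineSpan] at hdim
  have hn0 : 0 < n := by omega
  rcases Set.eq_empty_or_nonempty F with hFe | ⟨x₀, hx₀⟩
  · exfalso
    rw [hFe, vectorSpan_empty] at hdim
    rw [finrank_bot] at hdim
    omega
  rw [hFeq] at hx₀
  obtain ⟨hx₀P, hmax'⟩ := hx₀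
  set m := ℓ x₀ with hm
  have hmax : ∀ y ∈ PN n, ℓ y ≤ m := hmax'
  set b : Fin n → ℝ := fun i => ℓ (Pi.single i 1) with hbset
  have hbdef : ∀ i, b i = ℓ (Pi.single i 1) := fun i => rfl
  have hℓx : ∀ x : Fin n → ℝ, ℓ x = ∑ i, x i * b i := by
    intro x
    rw [LinearMap.pi_apply_eq_sum_univ]
    refine Finset.sum_congr rfl fun i _ => ?_
    rw [smul_eq_mul, hbdef, single_eq_ite]
  have hbm : ∀ i, b i ≤ m := fun i => hbdef i ▸ hmax _ (single_mem_PN i)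
  have hbm' : ∀ i, -m ≤ b i := by
    intro i
    have := hmax _ (neg_single_mem_PN i)
    rw [map_neg, ← hbdef] at this
    linarith
  have hones : ℓ (fun _ => (1:ℝ)) = ∑ i, b i := by rw [hℓx]; simp
  have hSm : ∑ i, b i ≤ m := hones ▸ hmax _ ones_mem_PN
  have hSm' : -m ≤ ∑ i, b i := by
    have h1 := hmax _ neg_ones_mem_PN
    have h2 : (fun _ => (-1:ℝ) : Fin n → ℝ) = -(fun _ => (1:ℝ)) := by funext j; simp
    rw [h2, map_neg, hones] at h1
    linarith
  have hm0 : 0 < m := by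
    rcases lt_or_ge 0 m with h | h
    · exact h
    · exfalso
      apply hℓ0
      refine LinearMap.ext fun x => ?_
      rw [hℓx, LinearMap.zero_apply]
      have hb0 : ∀ i, b i = 0 := fun i => le_antisymm (le_trans (hbm i) h)
        (by have := hbm' i; linarith)
      simp [hb0]
  have hFset : F = {x | x ∈ PN n ∧ ℓ x = m} := by
    rw [hFeq]
    ext x
    simp only [Set.mem_setOf_eq]
    constructor
    · rintro ⟨hxP, hxm⟩
      exact ⟨hxP, le_antisymm (hmax x hxP) (hxm x₀ hx₀P)⟩
    · rintro ⟨hxP, hxm⟩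
      exact ⟨hxP, fun y hy => hxm ▸ hmax y hy⟩
  set VF : Set (Fin n → ℝ) := {v | v ∈ Vtx n ∧ ℓ v = m} with hVFdef
  have hFhull : F = convexHull ℝ VF := by
    apply Set.Subset.antisymm
    · intro x hx
      rw [hFset] at hx
      exact mem_convexHull_exposed (Vtx_finite n) ℓ
        (fun v hv => hmax v (subset_convexHull ℝ _ hv)) hx.1 hx.2
    · rw [hFset]
      refine convexHull_min ?_ ?_
      · rintro v ⟨hv, hvm⟩
        exact ⟨subset_convexHull ℝ _ hv, hvm⟩
      · have heq : {x | x ∈ PN n ∧ ℓ x = m} = PN n ∩ {x | ℓ x = m} := rfl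
        rw [heq]
        exact (convex_convexHull ℝ _).inter (convex_hyperplane ℓ.isLinear m)
  have hdimVF : Module.finrank ℝ (vectorSpan ℝ VF) = n - 1 := by
    rw [hFhull, ← direction_affineSpan, affineSpan_convexHull, direction_affineSpan] at hdim
    exact hdim
  by_cases hT : ∀ i, b i = m ∨ b i = -m
  · -- good case : construct ε
    set ε : Fin n → ℝ := fun i => b i / m with hε
    have hε1 : ∀ i, ε i = 1 ∨ ε i = -1 := by
      intro i
      rcases hT i with h | h
      · left; rw [hε]; simp only; rw [h]; field_simp
      · right; rw [hε]; simp only; rw [h]; field_simp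
    have hbε : ∀ i, b i = m * ε i := by
      intro i; rw [hε]; simp only; field_simp
    have hsumε : ∑ i, b i = m * ∑ i, ε i := by
      rw [Finset.mul_sum]
      exact Finset.sum_congr rfl fun i _ => hbε i
    have hle1 : ∑ i, ε i ≤ 1 := by
      have h1 : m * ∑ i, ε i ≤ m * 1 := by rw [mul_one, ← hsumε]; exact hSm
      exact (mul_le_mul_iff_right₀ hm0).mp h1
    have hge1 : -1 ≤ ∑ i, ε i := by
      have h1 : m * (-1:ℝ) ≤ m * ∑ i, ε i := by rw [← hsumε]; linarith
      exact (mul_le_mul_iff_right₀ hm0).mp h1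
    obtain ⟨c, hcle, hc⟩ := sum_pm Finset.univ ε (fun i _ => hε1 i)
    rw [Finset.card_univ, Fintype.card_fin] at hc
    have hsum1 : (∑ i, ε i) = 1 ∨ (∑ i, ε i) = -1 := by
      obtain ⟨r, hr⟩ := hodd
      have h2 : 2*(c:ℝ) - n ≤ 1 := hc ▸ hle1
      have h3 : (-1:ℝ) ≤ 2*(c:ℝ) - n := hc ▸ hge1
      have h4 : (2*c : ℤ) ≤ (n:ℤ) + 1 := by
        have : (2*(c:ℝ)) ≤ (n:ℝ) + 1 := by linarith
        exact_mod_cast this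
      have h5 : (n:ℤ) - 1 ≤ 2*(c:ℤ) := by
        have : (n:ℝ) - 1 ≤ 2*(c:ℝ) := by linarith
        exact_mod_cast this
      have hzn : (n:ℤ) = 2*(r:ℤ)+1 := by exact_mod_cast hr
      rw [hc]
      rcases (by omega : (2*(c:ℤ) = (n:ℤ) + 1) ∨ (2*(c:ℤ) = (n:ℤ) - 1)) with h | h
      · left
        have : 2*(c:ℝ) = (n:ℝ) + 1 := by exact_mod_cast h
        linarith
      · right
        have : 2*(c:ℝ) = (n:ℝ) - 1 := by exact_mod_cast h
        linarith
    have hεA : ε ∈ A n := ⟨hε1, hsum1⟩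
    refine ⟨ε, hεA, ?_⟩
    have hlm : ∀ x, ℓ x = m * lf ε x := by
      intro x
      rw [hℓx, lf_apply, Finset.mul_sum]
      exact Finset.sum_congr rfl fun i _ => by rw [hbε i]; ring
    rw [hFeq]
    ext x
    simp only [Fface, Set.mem_setOf_eq]
    constructor
    · rintro ⟨hxP, hx⟩
      refine ⟨hxP, fun y hy => ?_⟩
      have h1 := hx y hy
      rw [hlm y, hlm x] at h1
      exact (mul_le_mul_iff_right₀ hm0).mp h1
    · rintro ⟨hxP, hx⟩
      refine ⟨hxP, fun y hy => ?_⟩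
      rw [hlm y, hlm x]
      exact mul_le_mul_of_nonneg_left (hx y hy) (le_of_lt hm0)
  · -- impossible case
    exfalso
    push_neg at hT
    obtain ⟨i0, hi0m, hi0m'⟩ := hT
    have hi0r : b i0 < m := lt_of_le_of_ne (hbm i0) hi0m
    have hi0l : -m < b i0 := lt_of_le_of_ne (hbm' i0) (fun h => hi0m' h.symm)
    by_cases hS : (∑ i, b i = m) ∨ (∑ i, b i = -m)
    · rcases hS with h | h
      · exact branch_contra hn hodd hm0 hbdef hℓx hVFdef hdimVF hi0l hi0r 1 (Or.inl rfl)
          (by rw [one_mul]; exact h)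
      · exact branch_contra hn hodd hm0 hbdef hℓx hVFdef hdimVF hi0l hi0r (-1) (Or.inr rfl)
          (by rw [neg_one_mul]; exact h)
    · -- no ones-vertex at all : dimension contradiction
      push_neg at hS
      obtain ⟨hS1, hS2⟩ := hS
      set T : Finset (Fin n) := Finset.univ.filter (fun i => b i = m ∨ b i = -m) with hTdef
      set f : Fin n → (Fin n → ℝ) :=
        fun i => if b i = m then (Pi.single i 1 : Fin n → ℝ) else -Pi.single i 1 with hf
      have hi0T : i0 ∉ T := by
        simp only [hTdef, Finset.mem_filter, Finset.mem_univ, true_and]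
        rintro (h | h)
        · exact hi0m h
        · exact hi0m' h
      have hVW : VF ⊆ ↑(T.image f) := by
        rintro v ⟨hv, hvm⟩
        rcases hv with ⟨i, rfl | rfl⟩ | rfl | rfl
        · have hbi : b i = m := by rw [hbdef]; exact hvm
          refine Finset.mem_coe.mpr (Finset.mem_image.mpr ⟨i, ?_, ?_⟩)
          · simp [hTdef, hbi]
          · simp [hf, hbi]
        · have hbi : b i = -m := by
            have h2 : ℓ (-Pi.single i 1) = m := hvm
            rw [map_neg, ← hbdef] at h2
            linarith
          refine Finset.mem_coe.mpr (Finset.mem_image.mpr ⟨i, ?_, ?_⟩)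
          · simp [hTdef, hbi]
          · rw [hf]
            simp only
            rw [if_neg (by rw [hbi]; intro h; linarith)]
        · exact absurd (hones ▸ hvm) hS1
        · exfalso
          apply hS2
          have h1 : ℓ (fun _ => (-1:ℝ)) = -∑ i, b i := by
            rw [hℓx, ← Finset.sum_neg_distrib]
            exact Finset.sum_congr rfl fun i _ => by ring
          rw [h1] at hvm
          linarith
      have hTsub : T ⊆ Finset.univ.erase i0 := by
        intro i hi
        exact Finset.mem_erase.mpr ⟨fun h => hi0T (h ▸ hi), Finset.mem_univ i⟩
      have hcardT : T.card ≤ n - 1 := by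
        have h4 := Finset.card_le_card hTsub
        rw [Finset.card_erase_of_mem (Finset.mem_univ i0), Finset.card_univ,
          Fintype.card_fin] at h4
        exact h4
      have hcardW : (T.image f).card ≤ (n-2) + 1 := by
        have h7 := Finset.card_image_le (s := T) (f := f)
        omega
      have h8 := finrank_vs_le hVW hcardW
      omega

lemma single_mem_Fface_iff (hn : 0 < n) {ε : Fin n → ℝ} (hε : ε ∈ A n) (i : Fin n) :
    (Pi.single i 1 : Fin n → ℝ) ∈ Fface ε ↔ ε i = 1 := by
  constructor
  · intro h
    have h1 := mem_Fface_lf_eq_one hn hε h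
    rwa [lf_single] at h1
  · intro h
    have h2 : ε i • (Pi.single i 1 : Fin n → ℝ) = Pi.single i 1 := by rw [h, one_smul]
    exact h2 ▸ pt_mem_Fface hε i

lemma Fface_injOn (hn : 0 < n) : Set.InjOn (fun ε => Fface (n := n) ε) (A n) := by
  intro ε hε ε' hε' h
  funext i
  rcases hε.1 i with h1 | h1 <;> rcases hε'.1 i with h2 | h2
  · rw [h1, h2]
  · exfalso
    have h3 := (single_mem_Fface_iff hn hε i).mpr h1
    have h4 : (Pi.single i 1 : Fin n → ℝ) ∈ Fface ε' := by
      have h5 : Fface (n := n) ε = Fface ε' := h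
      exact h5 ▸ h3
    rw [single_mem_Fface_iff hn hε' i, h2] at h4
    norm_num at h4
  · exfalso
    have h3 := (single_mem_Fface_iff hn hε' i).mpr h2
    have h4 : (Pi.single i 1 : Fin n → ℝ) ∈ Fface ε := by
      have h5 : Fface (n := n) ε = Fface ε' := h
      exact h5 ▸ h3
    rw [single_mem_Fface_iff hn hε i, h1] at h4
    norm_num at h4
  · rw [h1, h2]

/-- sign vector attached to a subset -/
def emap (s : Finset (Fin n)) : Fin n → ℝ := fun i => if i ∈ s then 1 else -1

lemma emap_inj : Function.Injective (emap (n := n)) := by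
  intro s t h
  ext i
  have h1 := congrFun h i
  simp only [emap] at h1
  by_cases hs : i ∈ s <;> by_cases ht : i ∈ t <;>
    simp [hs, ht] at h1 ⊢ <;> norm_num at h1

lemma sum_emap (s : Finset (Fin n)) : ∑ i, emap s i = 2*(s.card:ℝ) - n := by
  classical
  rw [← Finset.sum_filter_add_sum_filter_not Finset.univ (fun i => i ∈ s)]
  have hfil : Finset.univ.filter (fun i => i ∈ s) = s := by
    ext i; simp
  have h1 : ∑ i ∈ Finset.univ.filter (fun i => i ∈ s), emap s i = (s.card : ℝ) := by
    rw [hfil]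
    have he : ∀ i ∈ s, emap s i = 1 := fun i hi => by simp [emap, hi]
    rw [Finset.sum_congr rfl he, Finset.sum_const, nsmul_eq_mul, mul_one]
  have h2 : ∑ i ∈ Finset.univ.filter (fun i => ¬ i ∈ s), emap s i
      = -(((Finset.univ.filter (fun i => ¬ i ∈ s)).card : ℝ)) := by
    have he : ∀ i ∈ Finset.univ.filter (fun i => ¬ i ∈ s), emap s i = -1 := by
      intro i hi
      have hns := (Finset.mem_filter.mp hi).2
      simp [emap, hns]
    rw [Finset.sum_congr rfl he, Finset.sum_const, nsmul_eq_mul, mul_neg_one]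
  rw [h1, h2]
  have h3 := Finset.card_filter_add_card_filter_not (s := Finset.univ)
    (p := fun i => i ∈ s)
  rw [hfil, Finset.card_univ, Fintype.card_fin] at h3
  have h4 : (s.card : ℝ) + ((Finset.univ.filter (fun i => ¬ i ∈ s)).card : ℝ) = (n:ℝ) := by
    exact_mod_cast congrArg (Nat.cast : ℕ → ℝ) h3
  linarith

lemma A_eq (hn : 3 ≤ n) (hodd : Odd n) :
    A n = emap '' {s : Finset (Fin n) | s.card = (n+1)/2 ∨ s.card = (n-1)/2} := by
  classical
  obtain ⟨r, hr⟩ := hodd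
  ext ε
  constructor
  · rintro ⟨h1, h2⟩
    set s : Finset (Fin n) := Finset.univ.filter (fun i => ε i = 1) with hs
    have hemap : emap s = ε := by
      funext i
      simp only [emap, hs, Finset.mem_filter, Finset.mem_univ, true_and]
      by_cases h : ε i = 1
      · rw [if_pos h, h]
      · rcases h1 i with hv | hv
        · exact absurd hv h
        · rw [if_neg h, hv]
    have hsum : ∑ i, ε i = 2*(s.card:ℝ) - n := by rw [← hemap]; exact sum_emap s
    refine ⟨s, ?_, hemap⟩
    rcases h2 with h | h
    · left
      have : 2*(s.card:ℤ) - (n:ℤ) = 1 := by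
        exact_mod_cast (by rw [← hsum]; exact_mod_cast h : 2*(s.card:ℝ) - (n:ℝ) = 1)
      omega
    · right
      have : 2*(s.card:ℤ) - (n:ℤ) = -1 := by
        exact_mod_cast (by rw [← hsum]; exact_mod_cast h : 2*(s.card:ℝ) - (n:ℝ) = -1)
      omega
  · rintro ⟨s, hcard, rfl⟩
    refine ⟨fun i => ?_, ?_⟩
    · by_cases h : i ∈ s
      · left; simp [emap, h]
      · right; simp [emap, h]
    · rw [sum_emap]
      rcases hcard with h | h
      · left
        have h2 : 2*(s.card:ℤ) = (n:ℤ) + 1 := by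
          rw [h]; omega
        have h3 : 2*(s.card:ℝ) = (n:ℝ) + 1 := by exact_mod_cast h2
        linarith
      · right
        have h2 : 2*(s.card:ℤ) = (n:ℤ) - 1 := by
          rw [h]; omega
        have h3 : 2*(s.card:ℝ) = (n:ℝ) - 1 := by exact_mod_cast h2
        linarith

lemma ncard_B (hn : 3 ≤ n) (hodd : Odd n) :
    Set.ncard {s : Finset (Fin n) | s.card = (n+1)/2 ∨ s.card = (n-1)/2}
      = 2 * Nat.choose n ((n - 1) / 2) := by
  classical
  obtain ⟨r, hr⟩ := hodd
  have hne : (n+1)/2 ≠ (n-1)/2 := by omega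
  have hBeq : {s : Finset (Fin n) | s.card = (n+1)/2 ∨ s.card = (n-1)/2}
      = ↑(Finset.univ.filter (fun s : Finset (Fin n) => s.card = (n+1)/2 ∨ s.card = (n-1)/2)) := by
    ext s; simp
  rw [hBeq, Set.ncard_coe_finset]
  rw [Finset.filter_or]
  rw [Finset.card_union_of_disjoint]
  · have hcard : ∀ k : ℕ, (Finset.univ.filter (fun s : Finset (Fin n) => s.card = k)).card
        = Nat.choose n k := by
      intro k
      rw [← Finset.powerset_univ, ← Finset.powersetCard_eq_filter, Finset.card_powersetCard,
        Finset.card_univ, Fintype.card_fin]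
    rw [hcard, hcard]
    have hsymm : Nat.choose n ((n+1)/2) = Nat.choose n ((n-1)/2) := by
      have h1 : (n+1)/2 ≤ n := by omega
      have h2 : n - (n+1)/2 = (n-1)/2 := by omega
      rw [← h2, Nat.choose_symm h1]
    rw [hsymm]
    ring
  · rw [Finset.disjoint_filter]
    intro s _ h1 h2
    omega

end CFPN

/-- For odd `n ≥ 3` (so `N = n+1` even), the number of facets of `P_N` is exactly
`2 · C(N-1, N/2 - 1) = 2 · C(n, (n-1)/2)`. -/
theorem card_facets_PN (n : ℕ) (hn : 3 ≤ n) (hodd : Odd n) :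
    Set.ncard {F : Set (Fin n → ℝ) | IsFacet n (PN n) F} =
      2 * Nat.choose n ((n - 1) / 2) := by
  have hn0 : 0 < n := by omega
  have hset : {F : Set (Fin n → ℝ) | IsFacet n (PN n) F}
      = (fun ε => CFPN.Fface ε) '' (CFPN.A n) := by
    ext F
    simp only [Set.mem_setOf_eq, Set.mem_image]
    constructor
    · intro hF
      obtain ⟨ε, hε, hFe⟩ := CFPN.facet_classify hn hodd hF
      exact ⟨ε, hε, hFe.symm⟩
    · rintro ⟨ε, hε, rfl⟩
      exact CFPN.isFacet_Fface hn0 hε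
  rw [hset, Set.ncard_image_of_injOn (CFPN.Fface_injOn hn0),
    CFPN.A_eq hn hodd, Set.ncard_image_of_injOn (CFPN.emap_inj.injOn),
    CFPN.ncard_B hn hodd]


end
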